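/- Under Assumptions A1–A3 and A5, the kernel of I − X^⊤ S equals the redundancy space: ker(I − X^⊤ S) = Z := ker(T^⊤) ∩ ker(I + X^⊤). -/

import Mathlib

set_option synthInstance.maxHeartbeats 1000000
set_option maxHeartbeats 2000000

/-- The transpose (dual map) `B^⊤ : Y* → X*` of a bounded linear operator `B : X → Y`. -/
noncomputable def trOp {X Y : Type*} [NormedAddCommGroup X] [NormedSpace ℂ X]
    [NormedAddCommGroup Y] [NormedSpace ℂ Y] (B : X →L[ℂ] Y) :
    (Y →L[ℂ] ℂ) →L[ℂ] (X →L[ℂ] ℂ) :=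
  (ContinuousLinearMap.compL ℂ X Y ℂ).flip B

lemma trOp_apply {X Y : Type*} [NormedAddCommGroup X] [NormedSpace ℂ X]
    [NormedAddCommGroup Y] [NormedSpace ℂ Y] (B : X →L[ℂ] Y)
    (μ : Y →L[ℂ] ℂ) (v : X) : trOp B μ v = μ (B v) := rfl

/-- The scattering operator `S = −I + α (M + X^⊤ M X) T Ã⁻¹ T^⊤`, with `Atinv = Ã⁻¹`. -/
noncomputable def scatOp {U Lam : Type*}
    [NormedAddCommGroup U] [NormedSpace ℂ U] [NormedAddCommGroup Lam] [NormedSpace ℂ Lam]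
    (T : U →L[ℂ] Lam) (X : Lam →L[ℂ] Lam) (M : Lam →L[ℂ] (Lam →L[ℂ] ℂ))
    (Atinv : (U →L[ℂ] ℂ) →L[ℂ] U) (α : ℂ) :
    (Lam →L[ℂ] ℂ) →L[ℂ] (Lam →L[ℂ] ℂ) :=
  -(ContinuousLinearMap.id ℂ (Lam →L[ℂ] ℂ)) +
    α • (((M + (trOp X).comp (M.comp X)).comp T).comp (Atinv.comp (trOp T)))

lemma scatOp_apply {U Lam : Type*}
    [NormedAddCommGroup U] [NormedSpace ℂ U] [NormedAddCommGroup Lam] [NormedSpace ℂ Lam]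
    (T : U →L[ℂ] Lam) (X : Lam →L[ℂ] Lam) (M : Lam →L[ℂ] (Lam →L[ℂ] ℂ))
    (Atinv : (U →L[ℂ] ℂ) →L[ℂ] U) (α : ℂ) (μ : Lam →L[ℂ] ℂ) (l : Lam) :
    scatOp T X M Atinv α μ l =
      -(μ l) + α * (M (T (Atinv (trOp T μ))) l
        + M (X (T (Atinv (trOp T μ)))) (X l)) := by
  simp [scatOp, trOp_apply, mul_add]

/-- `ker(I − X^⊤ S) = Z = ker(T^⊤) ∩ ker(I + X^⊤)`. -/
theorem statement12
    {Uhat U Lam : Type*}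
    [NormedAddCommGroup Uhat] [InnerProductSpace ℂ Uhat] [CompleteSpace Uhat]
    [NormedAddCommGroup U] [InnerProductSpace ℂ U] [CompleteSpace U]
    [NormedAddCommGroup Lam] [InnerProductSpace ℂ Lam] [CompleteSpace Lam]
    (R : Uhat →L[ℂ] U) (T : U →L[ℂ] Lam) (X : Lam →L[ℂ] Lam)
    -- Assumption A1
    (hRinj : LinearMap.ker (R : Uhat →ₗ[ℂ] U) = ⊥)
    (hRclosed : IsClosed (Set.range R))
    -- Assumption A2
    (hX2 : X.comp X = ContinuousLinearMap.id ℂ Lam)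
    (hA2 : LinearMap.range (R : Uhat →ₗ[ℂ] U) = LinearMap.ker ((ContinuousLinearMap.id ℂ Lam - X).comp T : U →ₗ[ℂ] Lam))
    (A : U →L[ℂ] (U →L[ℂ] ℂ))
    -- `Â = R^⊤ A R` bijective with bounded inverse
    (Ahatinv : (Uhat →L[ℂ] ℂ) →L[ℂ] Uhat)
    (hAhat_left : ∀ uhat : Uhat, Ahatinv (trOp R (A (R uhat))) = uhat)
    (hAhat_right : ∀ g : Uhat →L[ℂ] ℂ, trOp R (A (R (Ahatinv g))) = g)
    (α : ℂ) (hα : α ≠ 0)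
    (M : Lam →L[ℂ] (Lam →L[ℂ] ℂ))
    -- Assumption A3: `M + X^⊤ M X` has a bounded inverse
    (Ninv : (Lam →L[ℂ] ℂ) →L[ℂ] Lam)
    (hNl : ∀ l : Lam, Ninv ((M + (trOp X).comp (M.comp X)) l) = l)
    (hNr : ∀ μ : Lam →L[ℂ] ℂ, (M + (trOp X).comp (M.comp X)) (Ninv μ) = μ)
    -- Assumption A5: `Ã = A + α T^⊤ M T` has a bounded inverse
    (Atinv : (U →L[ℂ] ℂ) →L[ℂ] U)
    (hAt_l : ∀ u : U, Atinv ((A + α • ((trOp T).comp (M.comp T))) u) = u)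
    (hAt_r : ∀ g : U →L[ℂ] ℂ, (A + α • ((trOp T).comp (M.comp T))) (Atinv g) = g) :
    LinearMap.ker ((ContinuousLinearMap.id ℂ (Lam →L[ℂ] ℂ) -
        (trOp X).comp (scatOp T X M Atinv α) :
          (Lam →L[ℂ] ℂ) →L[ℂ] (Lam →L[ℂ] ℂ)) : (Lam →L[ℂ] ℂ) →ₗ[ℂ] (Lam →L[ℂ] ℂ)) =
      LinearMap.ker (trOp T : (Lam →L[ℂ] ℂ) →ₗ[ℂ] (U →L[ℂ] ℂ)) ⊓
        LinearMap.ker ((ContinuousLinearMap.id ℂ (Lam →L[ℂ] ℂ) + trOp X :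
          (Lam →L[ℂ] ℂ) →L[ℂ] (Lam →L[ℂ] ℂ)) : (Lam →L[ℂ] ℂ) →ₗ[ℂ] (Lam →L[ℂ] ℂ)) := by
  have hXX : ∀ l : Lam, X (X l) = l := by
    intro l
    have := ContinuousLinearMap.ext_iff.mp hX2 l
    simpa using this
  have hRker : ∀ w : Uhat, X (T (R w)) = T (R w) := by
    intro w
    have hmem : R w ∈ LinearMap.range (R : Uhat →ₗ[ℂ] U) := ⟨w, rfl⟩
    rw [hA2, LinearMap.mem_ker] at hmem
    have h : T (R w) - X (T (R w)) = 0 := by simpa using hmem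
    exact (sub_eq_zero.mp h).symm
  apply le_antisymm
  · intro μ hμ
    have h0 : (ContinuousLinearMap.id ℂ (Lam →L[ℂ] ℂ) -
        (trOp X).comp (scatOp T X M Atinv α)) μ = 0 := LinearMap.mem_ker.mp hμ
    have hfix : ∀ l, μ l = scatOp T X M Atinv α μ (X l) := by
      intro l
      have h := ContinuousLinearMap.ext_iff.mp h0 l
      simp only [ContinuousLinearMap.sub_apply, ContinuousLinearMap.id_apply,
        ContinuousLinearMap.comp_apply, trOp_apply, ContinuousLinearMap.zero_apply] at h
      linear_combination h
    set u : U := Atinv (trOp T μ) with hu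
    have hstar : ∀ l, μ l + μ (X l) = α * (M (X (T u)) l + M (T u) (X l)) := by
      intro l
      have h := hfix l
      rw [scatOp_apply, hXX l] at h
      linear_combination h
    -- Step A : X (T u) = T u
    have hXtu : X (T u) = T u := by
      set w : Lam := X (T u) - T u with hwdef
      have hMw : ∀ l, M w l = M w (X l) := by
        intro l
        have h1 := hstar l
        have h2 := hstar (X l)
        rw [hXX l] at h2
        have h3 : α * (M (X (T u)) l - M (T u) l)
            = α * (M (X (T u)) (X l) - M (T u) (X l)) := by linear_combination h2 - h1
        have h4 := mul_left_cancel₀ hα h3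
        simp only [hwdef, map_sub, ContinuousLinearMap.sub_apply]
        linear_combination h4
      have hXw : X w = -w := by
        simp [hwdef, map_sub, hXX, neg_sub]
      have hNw : (M + (trOp X).comp (M.comp X)) w = 0 := by
        ext l
        simp only [ContinuousLinearMap.add_apply, ContinuousLinearMap.comp_apply,
          trOp_apply, ContinuousLinearMap.zero_apply, hXw, map_neg,
          ContinuousLinearMap.neg_apply]
        linear_combination hMw l
      have hw0 : w = 0 := by
        have h := hNl w
        rw [hNw, map_zero] at h
        exact h.symm
      exact sub_eq_zero.mp hw0
    -- u ∈ range R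
    have humem : u ∈ LinearMap.range (R : Uhat →ₗ[ℂ] U) := by
      rw [hA2, LinearMap.mem_ker]
      have : (ContinuousLinearMap.id ℂ Lam - X) (T u) = 0 := by
        simp [ContinuousLinearMap.sub_apply, hXtu]
      simpa using this
    obtain ⟨uh, huh : R uh = u⟩ := humem
    -- equation (1): Ã u = T^⊤ μ, pointwise
    have h1eq : ∀ v, A u v + α * M (T u) (T v) = μ (T v) := by
      intro v
      have h := ContinuousLinearMap.ext_iff.mp (hAt_r (trOp T μ)) v
      simp only [← hu, ContinuousLinearMap.add_apply, ContinuousLinearMap.smul_apply,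
        ContinuousLinearMap.comp_apply, trOp_apply, smul_eq_mul] at h
      linear_combination h
    -- Step B : R^⊤ (A u) = 0
    have hRAu : trOp R (A u) = 0 := by
      ext v
      have hs := hstar (T (R v))
      rw [hRker v, hXtu] at hs
      have hμTR : μ (T (R v)) = α * M (T u) (T (R v)) := by linear_combination hs / 2
      have h := h1eq (R v)
      simp only [trOp_apply, ContinuousLinearMap.zero_apply]
      linear_combination h + hμTR
    have huh0 : uh = 0 := by
      have h := hAhat_left uh
      rw [huh, hRAu, map_zero] at h
      exact h.symm
    have hu0 : u = 0 := by rw [← huh, huh0, map_zero]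
    have hTμ : trOp T μ = 0 := by
      have h := hAt_r (trOp T μ)
      rw [← hu, hu0, map_zero] at h
      exact h.symm
    have hXμ : ∀ l, μ l + μ (X l) = 0 := by
      intro l
      have hs := hstar l
      rw [hu0] at hs
      simpa using hs
    refine Submodule.mem_inf.mpr ⟨LinearMap.mem_ker.mpr hTμ, LinearMap.mem_ker.mpr ?_⟩
    ext l
    simp only [ContinuousLinearMap.coe_coe, ContinuousLinearMap.add_apply, ContinuousLinearMap.id_apply, trOp_apply,
      ContinuousLinearMap.zero_apply]
    exact hXμ l
  · intro μ hμ
    obtain ⟨h1, h2⟩ := Submodule.mem_inf.mp hμ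
    have h1' : trOp T μ = 0 := LinearMap.mem_ker.mp h1
    have h2' : ∀ l, μ (X l) = -(μ l) := by
      intro l
      have h := ContinuousLinearMap.ext_iff.mp (LinearMap.mem_ker.mp h2) l
      simp only [ContinuousLinearMap.coe_coe, ContinuousLinearMap.add_apply, ContinuousLinearMap.id_apply, trOp_apply,
        ContinuousLinearMap.zero_apply] at h
      linear_combination h
    refine LinearMap.mem_ker.mpr ?_
    ext l
    simp only [ContinuousLinearMap.coe_coe, ContinuousLinearMap.sub_apply, ContinuousLinearMap.id_apply,
      ContinuousLinearMap.comp_apply, trOp_apply, ContinuousLinearMap.zero_apply]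
    rw [scatOp_apply, h1']
    simp [h2' l]
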